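/- Let R be any unital (possibly noncommutative) ring and let n, m ≥ 2. Then the elementary matrix group EL(n; Mat(m; R)) of n×n matrices over the matrix ring Mat(m;R), viewed naturally as nm×nm matrices over R, equals EL(nm; R). In particular, every elementary matrix 1 + r·e_{i,j} (i ≠ j, r ∈ R) of size nm is a product of matrices of the form 1 + M where M is supported in a single off-diagonal m×m block. -/

import Mathlib

set_option maxHeartbeats 1000000

/-- The elementary matrix group `EL(ι; R)`: the subgroup of `GL` (units of the matrix ring)
generated by the elementary matrices `1 + r·e_{i,j}` with `i ≠ j` and `r ∈ R`. -/
def EL (ι : Type*) [Fintype ι] [DecidableEq ι] (R : Type*) [Ring R] :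
    Subgroup (Matrix ι ι R)ˣ :=
  Subgroup.closure
    {u : (Matrix ι ι R)ˣ | ∃ i j : ι, ∃ r : R,
      i ≠ j ∧ Units.val u = 1 + Matrix.single i j r}

open Matrix

section Helpers

variable {ι : Type*} [Fintype ι] [DecidableEq ι] {R : Type*} [Ring R]

private lemma stdsq (i j : ι) (h : i ≠ j) (r s : R) :
    single i j r * single i j s = 0 :=
  single_mul_single_of_ne (c := r) i j i h.symm s

def elemUnit (i j : ι) (h : i ≠ j) (r : R) : (Matrix ι ι R)ˣ where
  val := 1 + single i j r
  inv := 1 - single i j r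
  val_inv := by
    rw [add_mul, one_mul, mul_sub, mul_one, stdsq i j h r r]; abel
  inv_val := by
    rw [sub_mul, one_mul, mul_add, mul_one, stdsq i j h r r]; abel

@[simp] lemma elemUnit_val (i j : ι) (h : i ≠ j) (r : R) :
    (elemUnit i j h r).val = 1 + single i j r := rfl

@[simp] lemma elemUnit_inv_val (i j : ι) (h : i ≠ j) (r : R) :
    ((elemUnit i j h r)⁻¹).val = 1 - single i j r := rfl

lemma elemUnit_mem (i j : ι) (h : i ≠ j) (r : R) :
    elemUnit i j h r ∈ EL ι R :=
  Subgroup.subset_closure ⟨i, j, r, h, rfl⟩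

private lemma comm_aux {S : Type*} [Ring S] {A B : S} (hA : A * A = 0) (hB : B * B = 0)
    (hBA : B * A = 0) : (1 + A) * ((1 + B) * ((1 - A) * (1 - B))) = 1 + A * B := by
  have h3 : A * B * A = 0 := by rw [mul_assoc, hBA, mul_zero]
  have h4 : A * B * B = 0 := by rw [mul_assoc, hB, mul_zero]
  have h5 : B * (A * B) = 0 := by rw [← mul_assoc, hBA, zero_mul]
  have h6 : A * (A * B) = 0 := by rw [← mul_assoc, hA, zero_mul]
  have e2 : (1 - A) * (1 - B) = 1 - A - B + A * B := by noncomm_ring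
  have e1 : (1 + B) * (1 - A - B + A * B) = 1 - A + A * B - B * A - B * B + B * (A * B) := by
    noncomm_ring
  rw [e2, e1, hBA, hB, h5]
  have e3 : (1 + A) * (1 - A + A * B - 0 - 0 + 0) =
      1 + A * B - A * A + A * (A * B) := by noncomm_ring
  rw [e3, hA, h6]
  abel

/-- The commutator identity for elementary units. -/
lemma elemUnit_comm {p s q : ι} (hps : p ≠ s) (hsq : s ≠ q) (hpq : p ≠ q) (r : R) :
    elemUnit p s hps r * (elemUnit s q hsq 1 * ((elemUnit p s hps r)⁻¹ *
      (elemUnit s q hsq 1)⁻¹)) = elemUnit p q hpq r := by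
  apply Units.ext
  rw [Units.val_mul, Units.val_mul, Units.val_mul]
  rw [elemUnit_val, elemUnit_val, elemUnit_inv_val, elemUnit_inv_val, elemUnit_val,
    comm_aux (stdsq p s hps r r) (stdsq s q hsq 1 1)
      (single_mul_single_of_ne (c := (1:R)) s q p hpq.symm r),
    single_mul_single_same, mul_one]

private lemma mul_list_sum_eq_zero {S : Type*} [Ring S] (a : S) :
    ∀ l : List S, (∀ x ∈ l, a * x = 0) → a * l.sum = 0
  | [], _ => by simp
  | b :: t, h => by
    rw [List.sum_cons, mul_add, h b (by simp), zero_add,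
      mul_list_sum_eq_zero a t (fun x hx => h x (by simp [hx]))]

private lemma list_prod_one_add {S : Type*} [Ring S] :
    ∀ l : List S, (∀ x ∈ l, ∀ y ∈ l, x * y = 0) →
      (l.map (fun x => 1 + x)).prod = 1 + l.sum
  | [], _ => by simp
  | a :: t, h => by
    rw [List.map_cons, List.prod_cons,
      list_prod_one_add t (fun x hx y hy => h x (by simp [hx]) y (by simp [hy])),
      List.sum_cons]
    have h0 : a * t.sum = 0 :=
      mul_list_sum_eq_zero a t fun x hx => h a (by simp) x (by simp [hx])
    have e : (1 + a) * (1 + t.sum) = 1 + a + t.sum + a * t.sum := by noncomm_ring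
    rw [e, h0]
    abel

end Helpers

/-- **`EL(n; Mat(m;R)) = EL(nm; R)`.** For any unital (possibly noncommutative) ring `R` and
`n, m ≥ 2`, the elementary matrix group over the matrix ring `Mat(m;R)`, viewed as `nm × nm`
matrices over `R` via the canonical ring isomorphism, equals `EL(nm; R)`. In particular, every
elementary matrix `1 + r·e_{i,j}` (`i ≠ j`) of size `nm` is a product of matrices of the form
`1 + M` with `M` supported in a single off-diagonal `m × m` block. -/
theorem EL_comp_eq_EL (n m : ℕ) (hn : 2 ≤ n) (hm : 2 ≤ m) (R : Type*) [Ring R] :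
    Subgroup.map
        (Units.map (Matrix.compRingEquiv (Fin n) (Fin m) R).toRingHom.toMonoidHom)
        (EL (Fin n) (Matrix (Fin m) (Fin m) R))
      = EL (Fin n × Fin m) R
    ∧ ∀ (i j : Fin n × Fin m), i ≠ j → ∀ (r : R)
        (u : (Matrix (Fin n × Fin m) (Fin n × Fin m) R)ˣ),
        Units.val u = 1 + Matrix.single i j r →
        ∃ l : List (Matrix (Fin n × Fin m) (Fin n × Fin m) R)ˣ,
          (∀ v ∈ l, ∃ a b : Fin n, a ≠ b ∧
            ∀ s q : Fin n × Fin m, ¬(s.1 = a ∧ q.1 = b) →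
              Units.val v s q
                = (1 : Matrix (Fin n × Fin m) (Fin n × Fin m) R) s q) ∧
          l.prod = u := by
  have hnt : Nontrivial (Fin n) := Fin.nontrivial_iff_two_le.mpr hn
  set F := (Units.map (Matrix.compRingEquiv (Fin n) (Fin m) R).toRingHom.toMonoidHom) with hF
  -- the image of a block elementary unit as a product of scalar elementary units
  have key : ∀ (i j : Fin n) (hij : i ≠ j) (M : Matrix (Fin m) (Fin m) R),
      F (elemUnit i j hij M) =
        ((Finset.univ : Finset (Fin m × Fin m)).toList.map
          (fun ab => elemUnit (i, ab.1) (j, ab.2)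
            (fun e => hij (congrArg Prod.fst e)) (M ab.1 ab.2))).prod := by
    intro i j hij M
    apply Units.ext
    have hr : (((Finset.univ : Finset (Fin m × Fin m)).toList.map
          (fun ab => elemUnit (i, ab.1) (j, ab.2)
            (fun e => hij (congrArg Prod.fst e)) (M ab.1 ab.2))).prod).val
        = (((Finset.univ : Finset (Fin m × Fin m)).toList.map
          (fun ab => elemUnit (i, ab.1) (j, ab.2)
            (fun e => hij (congrArg Prod.fst e)) (M ab.1 ab.2))).map Units.val).prod :=
      map_list_prod (Units.coeHom _) _
    rw [hr, List.map_map]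
    have h2 : (Units.val : (Matrix (Fin n × Fin m) (Fin n × Fin m) R)ˣ → _) ∘
        (fun ab : Fin m × Fin m => elemUnit (i, ab.1) (j, ab.2)
            (fun e => hij (congrArg Prod.fst e)) (M ab.1 ab.2))
        = (fun x => 1 + x) ∘ (fun ab : Fin m × Fin m =>
            single (i, ab.1) (j, ab.2) (M ab.1 ab.2)) := rfl
    rw [h2, ← List.map_map, list_prod_one_add]
    · rw [hF]
      show (Matrix.compRingEquiv (Fin n) (Fin m) R)
          (1 + single i j M) = _
      rw [map_add, _root_.map_one]
      congr 1
      rw [Finset.sum_map_toList]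
      ext ⟨p, a⟩ ⟨q, b⟩
      rw [Matrix.sum_apply]
      by_cases hip : i = p <;> by_cases hjq : j = q <;>
        simp [single, Prod.ext_iff, hip, hjq, Finset.sum_ite_eq,
          Fintype.sum_prod_type, ite_and, Finset.sum_ite_eq']
    · intro x hx y hy
      simp only [List.mem_map] at hx hy
      obtain ⟨ab, -, rfl⟩ := hx
      obtain ⟨cd, -, rfl⟩ := hy
      exact Matrix.single_mul_single_of_ne (j := (j, ab.2)) (k := (i, cd.1)) (h := fun e => hij ((congrArg Prod.fst e).symm)) ..
  have memMap : ∀ (p q : Fin n × Fin m) (h1 : p.1 ≠ q.1) (hpq : p ≠ q) (r : R),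
      elemUnit p q hpq r ∈
        Subgroup.map F (EL (Fin n) (Matrix (Fin m) (Fin m) R)) := by
    intro p q h1 hpq r
    refine ⟨elemUnit p.1 q.1 h1 (single p.2 q.2 r), elemUnit_mem _ _ _ _, ?_⟩
    apply Units.ext
    rw [hF]
    show (Matrix.compRingEquiv (Fin n) (Fin m) R)
        (1 + single p.1 q.1 (single p.2 q.2 r)) = _
    rw [map_add, _root_.map_one, elemUnit_val]
    congr 1
    ext ⟨x, a⟩ ⟨y, b⟩
    show (single p.1 q.1 (single p.2 q.2 r)) x y a b = _
    by_cases hx : p.1 = x <;> by_cases hy : q.1 = y <;>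
      simp [single, Prod.ext_iff, hx, hy]
  constructor
  · refine le_antisymm ?_ ?_
    · rw [Subgroup.map_le_iff_le_comap]
      refine (Subgroup.closure_le _).2 ?_
      rintro u ⟨i, j, M, hij, hval⟩
      simp only [SetLike.mem_coe, Subgroup.mem_comap]
      have hu : u = elemUnit i j hij M := Units.ext hval
      rw [hu, key i j hij M]
      refine list_prod_mem fun x hx => ?_
      simp only [List.mem_map] at hx
      obtain ⟨ab, -, rfl⟩ := hx
      exact elemUnit_mem _ _ _ _
    · refine (Subgroup.closure_le _).2 ?_
      rintro u ⟨i, j, r, hij, hval⟩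
      simp only [SetLike.mem_coe]
      have hu : u = elemUnit i j hij r := Units.ext hval
      rw [hu]
      by_cases h1 : i.1 = j.1
      · have h2 : i.2 ≠ j.2 := fun e => hij (Prod.ext h1 e)
        obtain ⟨k, hk⟩ := exists_ne i.1
        have his : i ≠ (k, i.2) := fun e => hk (congrArg Prod.fst e).symm
        have hsj : (k, i.2) ≠ j := fun e => hk ((congrArg Prod.fst e).trans h1.symm)
        rw [← elemUnit_comm his hsj hij r]
        exact mul_mem (memMap _ _ (fun e => hk e.symm) his r)
          (mul_mem (memMap _ _ (fun e => hk (e.trans h1.symm)) hsj 1)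
            (mul_mem (inv_mem (memMap _ _ (fun e => hk e.symm) his r))
              (inv_mem (memMap _ _ (fun e => hk (e.trans h1.symm)) hsj 1))))
      · exact memMap i j h1 hij r
  · intro i j hij r u hval
    have hu : u = elemUnit i j hij r := Units.ext hval
    by_cases h1 : i.1 = j.1
    · have h2 : i.2 ≠ j.2 := fun e => hij (Prod.ext h1 e)
      obtain ⟨k, hk⟩ := exists_ne i.1
      have his : i ≠ (k, i.2) := fun e => hk (congrArg Prod.fst e).symm
      have hsj : (k, i.2) ≠ j := fun e => hk ((congrArg Prod.fst e).trans h1.symm)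
      refine ⟨[elemUnit i (k, i.2) his r, elemUnit (k, i.2) j hsj 1,
        (elemUnit i (k, i.2) his r)⁻¹, (elemUnit (k, i.2) j hsj 1)⁻¹], ?_, ?_⟩
      · intro v hv
        simp only [List.mem_cons, List.not_mem_nil, or_false] at hv
        rcases hv with rfl | rfl | rfl | rfl
        · refine ⟨i.1, k, fun e => hk e.symm, fun p q hpq => ?_⟩
          rw [elemUnit_val, Matrix.add_apply, single_apply_of_ne, add_zero]
          exact fun ⟨e1, e2⟩ => hpq ⟨by rw [← e1], by rw [← e2]⟩
        · refine ⟨k, j.1, fun e => hk (e.trans h1.symm), fun p q hpq => ?_⟩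
          rw [elemUnit_val, Matrix.add_apply, single_apply_of_ne, add_zero]
          exact fun ⟨e1, e2⟩ => hpq ⟨by rw [← e1], by rw [← e2]⟩
        · refine ⟨i.1, k, fun e => hk e.symm, fun p q hpq => ?_⟩
          rw [elemUnit_inv_val, Matrix.sub_apply, single_apply_of_ne, sub_zero]
          exact fun ⟨e1, e2⟩ => hpq ⟨by rw [← e1], by rw [← e2]⟩
        · refine ⟨k, j.1, fun e => hk (e.trans h1.symm), fun p q hpq => ?_⟩
          rw [elemUnit_inv_val, Matrix.sub_apply, single_apply_of_ne, sub_zero]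
          exact fun ⟨e1, e2⟩ => hpq ⟨by rw [← e1], by rw [← e2]⟩
      · rw [hu]
        simp only [List.prod_cons, List.prod_nil, mul_one]
        exact elemUnit_comm his hsj hij r
    · refine ⟨[u], ?_, by simp⟩
      intro v hv
      simp only [List.mem_singleton] at hv
      subst hv
      refine ⟨i.1, j.1, h1, fun p q hpq => ?_⟩
      rw [hval, Matrix.add_apply, single_apply_of_ne, add_zero]
      exact fun ⟨e1, e2⟩ => hpq ⟨by rw [← e1], by rw [← e2]⟩
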